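/- Let p_1 < p_2 < ... < p_k be primes and let E_1, ..., E_k be infinite sets of positive natural numbers. Let N = N(p_1, ..., p_k, E_1, ..., E_k) be the set of all natural numbers n such that for each i = 1, ..., k the exponent of p_i in the canonical factorization of n lies in E_i, i.e. v_{p_i}(n) ∈ E_i. Then N is Buck measurable and μ(N) = ∏_{i=1}^k (1 - 1/p_i) · ∏_{i=1}^k Σ_{n_i ∈ E_i} 1/p_i^{n_i}. -/

import Mathlib

open scoped BigOperators

/-- Buck's measure density: the infimum of `∑ 1/mᵢ` over finite covers of `S`
by arithmetic progressions `{n | n ≡ rᵢ [MOD mᵢ]}`. -/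
noncomputable def buckDensity (S : Set ℕ) : ℝ :=
  sInf {x : ℝ | ∃ (k : ℕ) (r m : Fin k → ℕ), (∀ i, 0 < m i) ∧
    (S ⊆ ⋃ i, {n : ℕ | n ≡ r i [MOD m i]}) ∧ x = ∑ i, (1 : ℝ) / (m i)}

/-- A set is Buck measurable if `μ*(S) + μ*(ℕ \ S) = 1`. -/
def BuckMeasurable (S : Set ℕ) : Prop :=
  buckDensity S + buckDensity Sᶜ = 1

/-- `R(S : m)`: the number of residue classes modulo `m` occupied by `S`. -/
noncomputable def residueCount (S : Set ℕ) (m : ℕ) : ℕ :=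
  ((fun s => s % m) '' S).ncard

section BuckAux

open Finset Filter Topology

/-- The set of values of finite covers of `S` by arithmetic progressions. -/
def buckCoverSet (S : Set ℕ) : Set ℝ :=
  {x : ℝ | ∃ (k : ℕ) (r m : Fin k → ℕ), (∀ i, 0 < m i) ∧
    (S ⊆ ⋃ i, {n : ℕ | n ≡ r i [MOD m i]}) ∧ x = ∑ i, (1 : ℝ) / (m i)}

lemma buckDensity_eq (S : Set ℕ) : buckDensity S = sInf (buckCoverSet S) := rfl

lemma buckCoverSet_nonempty (S : Set ℕ) : (buckCoverSet S).Nonempty := by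
  refine ⟨1, 1, fun _ => 0, fun _ => 1, fun _ => one_pos, ?_, by simp⟩
  intro n _
  exact Set.mem_iUnion.mpr ⟨0, Nat.modEq_one⟩

lemma buckCoverSet_bddBelow (S : Set ℕ) : BddBelow (buckCoverSet S) := by
  refine ⟨0, ?_⟩
  rintro x ⟨K, r, m, hm, hcov, rfl⟩
  exact Finset.sum_nonneg fun i _ => by positivity

lemma buckDensity_le_of_cover (S : Set ℕ) (P : ℕ) (hP : 0 < P) (R : Finset ℕ)
    (hcov : ∀ n ∈ S, n % P ∈ R) : buckDensity S ≤ (R.card : ℝ) / P := by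
  apply csInf_le (buckCoverSet_bddBelow S)
  refine ⟨R.card, fun j => ((R.equivFin.symm j : R) : ℕ), fun _ => P, fun _ => hP, ?_, ?_⟩
  · intro n hn
    refine Set.mem_iUnion.mpr ⟨R.equivFin ⟨n % P, hcov n hn⟩, ?_⟩
    show n ≡ _ [MOD P]
    simp only [Equiv.symm_apply_apply]
    exact (Nat.mod_modEq n P).symm
  · rw [Finset.sum_const, card_univ, Fintype.card_fin, nsmul_eq_mul]
    ring

lemma card_residue_le (L m r : ℕ) (hdvd : m ∣ L) :
    ((Finset.range L).filter (fun n => n % m = r)).card ≤ L / m := by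
  rcases Nat.eq_zero_or_pos m with rfl | hm
  · obtain rfl : L = 0 := by simpa using hdvd
    simp
  rw [← Finset.card_range (L / m)]
  apply Finset.card_le_card_of_injOn (fun n => n / m)
  · intro n hn
    simp only [Finset.mem_coe, Finset.mem_filter, Finset.mem_range] at hn ⊢
    exact Nat.div_lt_div_of_lt_of_dvd hdvd hn.1
  · intro a ha b hb hab
    simp only [Finset.coe_filter, Set.mem_setOf_eq, Finset.mem_range] at ha hb
    simp only at hab
    have h1 := Nat.div_add_mod a m
    have h2 := Nat.div_add_mod b m
    rw [hab] at h1
    omega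

lemma one_le_cover_sum (K : ℕ) (r m : Fin K → ℕ) (hm : ∀ i, 0 < m i)
    (hcov : ∀ n : ℕ, ∃ i, n ≡ r i [MOD m i]) : (1 : ℝ) ≤ ∑ i, (1 : ℝ) / m i := by
  set L := ∏ i, m i with hL
  have hLpos : 0 < L := Finset.prod_pos fun i _ => hm i
  have h1 : (L : ℕ) ≤ ∑ i, ((Finset.range L).filter (fun n => n % m i = r i % m i)).card := by
    have hsub : Finset.range L ⊆ Finset.univ.biUnion
        (fun i => (Finset.range L).filter (fun n => n % m i = r i % m i)) := by
      intro n hn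
      obtain ⟨i, hi⟩ := hcov n
      exact Finset.mem_biUnion.mpr ⟨i, Finset.mem_univ i,
        Finset.mem_filter.mpr ⟨hn, hi⟩⟩
    calc L = (Finset.range L).card := (Finset.card_range L).symm
    _ ≤ _ := (Finset.card_le_card hsub).trans Finset.card_biUnion_le
  have h2 : (L : ℕ) ≤ ∑ i, L / m i :=
    h1.trans (Finset.sum_le_sum fun i _ =>
      card_residue_le L (m i) _ (Finset.dvd_prod_of_mem m (Finset.mem_univ i)))
  have h3 : (L : ℝ) ≤ ∑ i, (L : ℝ) / m i := by
    calc (L : ℝ) ≤ ((∑ i, L / m i : ℕ) : ℝ) := by exact_mod_cast h2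
    _ = ∑ i, (L : ℝ) / m i := by
        rw [Nat.cast_sum]
        exact Finset.sum_congr rfl fun i _ =>
          Nat.cast_div (Finset.dvd_prod_of_mem m (Finset.mem_univ i))
            (by exact_mod_cast (hm i).ne')
  have hL' : (0 : ℝ) < L := by exact_mod_cast hLpos
  have h4 : (L : ℝ) * 1 ≤ (L : ℝ) * ∑ i, (1 : ℝ) / m i := by
    rw [mul_one, Finset.mul_sum]
    refine h3.trans (le_of_eq (Finset.sum_congr rfl fun i _ => ?_))
    ring
  exact le_of_mul_le_mul_left h4 hL'

lemma one_le_add_cover (S : Set ℕ) :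
    ∀ x ∈ buckCoverSet S, ∀ y ∈ buckCoverSet Sᶜ, 1 ≤ x + y := by
  rintro x ⟨K1, r1, m1, hm1, hc1, rfl⟩ y ⟨K2, r2, m2, hm2, hc2, rfl⟩
  have h := one_le_cover_sum (K1 + K2) (Fin.append r1 r2) (Fin.append m1 m2) ?_ ?_
  · rw [Fin.sum_univ_add] at h
    refine h.trans (le_of_eq ?_)
    congr 1
    · exact Finset.sum_congr rfl fun i _ => by rw [Fin.append_left]
    · exact Finset.sum_congr rfl fun i _ => by rw [Fin.append_right]
  · intro i
    refine Fin.addCases (fun j => ?_) (fun j => ?_) i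
    · rw [Fin.append_left]; exact hm1 j
    · rw [Fin.append_right]; exact hm2 j
  · intro n
    by_cases hn : n ∈ S
    · obtain ⟨i, hi⟩ := Set.mem_iUnion.mp (hc1 hn)
      exact ⟨Fin.castAdd K2 i, by rwa [Fin.append_left, Fin.append_left]⟩
    · obtain ⟨i, hi⟩ := Set.mem_iUnion.mp (hc2 hn)
      exact ⟨Fin.natAdd K1 i, by rwa [Fin.append_right, Fin.append_right]⟩

lemma one_le_add_buckDensity (S : Set ℕ) : 1 ≤ buckDensity S + buckDensity Sᶜ := by
  rw [buckDensity_eq, buckDensity_eq]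
  have hB : ∀ x ∈ buckCoverSet S, 1 - x ≤ sInf (buckCoverSet Sᶜ) := fun x hx =>
    le_csInf (buckCoverSet_nonempty Sᶜ) fun y hy => by
      linarith [one_le_add_cover S x hx y hy]
  have h : 1 - sInf (buckCoverSet Sᶜ) ≤ sInf (buckCoverSet S) :=
    le_csInf (buckCoverSet_nonempty S) fun x hx => by linarith [hB x hx]
  linarith

lemma padicValNat_congr {p M a b : ℕ} (hp : p.Prime) (hab : a ≡ b [MOD p ^ (M + 1)])
    (ha : ¬ p ^ (M + 1) ∣ a) : padicValNat p a = padicValNat p b := by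
  haveI : Fact p.Prime := ⟨hp⟩
  have ha0 : a ≠ 0 := by rintro rfl; exact ha (dvd_zero _)
  have hb : ¬ p ^ (M + 1) ∣ b := fun h =>
    ha ((Nat.modEq_zero_iff_dvd).mp (hab.trans ((Nat.modEq_zero_iff_dvd).mpr h)))
  have hb0 : b ≠ 0 := by rintro rfl; exact hb (dvd_zero _)
  set e := padicValNat p a with he
  have heM : e + 1 ≤ M + 1 := by
    by_contra hcon
    exact ha ((pow_dvd_pow p (by omega)).trans pow_padicValNat_dvd)
  have h1 : p ^ e ∣ b := by
    have : a ≡ b [MOD p ^ e] := Nat.ModEq.of_dvd (pow_dvd_pow p (by omega)) hab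
    exact (Nat.modEq_zero_iff_dvd).mp
      (((Nat.modEq_zero_iff_dvd).mpr pow_padicValNat_dvd).symm.trans this).symm
  have h2 : ¬ p ^ (e + 1) ∣ b := by
    intro hdvd
    have : a ≡ b [MOD p ^ (e + 1)] := Nat.ModEq.of_dvd (pow_dvd_pow p heM) hab
    exact pow_succ_padicValNat_not_dvd ha0
      ((Nat.modEq_zero_iff_dvd).mp (this.trans ((Nat.modEq_zero_iff_dvd).mpr hdvd)))
  have h1' : e ≤ padicValNat p b := (padicValNat_dvd_iff_le hb0).mp h1
  have h2' : ¬ (e + 1 ≤ padicValNat p b) := fun h => h2 ((padicValNat_dvd_iff_le hb0).mpr h)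
  omega

lemma card_multiples_range (n d : ℕ) (hd : 0 < d) (hdvd : d ∣ n) :
    ((Finset.range n).filter (fun s => d ∣ s)).card = n / d := by
  have himg : (Finset.range n).filter (fun s => d ∣ s) =
      (Finset.range (n / d)).image (fun t => d * t) := by
    ext s
    simp only [Finset.mem_filter, Finset.mem_range, Finset.mem_image]
    constructor
    · rintro ⟨hs, t, rfl⟩
      exact ⟨t, by
        have := Nat.div_lt_div_of_lt_of_dvd hdvd hs
        rwa [Nat.mul_div_cancel_left t hd] at this, rfl⟩
    · rintro ⟨t, ht, rfl⟩
      refine ⟨?_, Dvd.intro t rfl⟩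
      obtain ⟨c, rfl⟩ := hdvd
      exact (Nat.mul_lt_mul_left hd).mpr (by rwa [Nat.mul_div_cancel_left c hd] at ht)
  rw [himg, Finset.card_image_of_injective _ fun a b h => by
    exact Nat.eq_of_mul_eq_mul_left hd h, Finset.card_range]

lemma card_zmod_filter (m : ℕ) [NeZero m] (Q : ℕ → Prop) [DecidablePred Q] :
    (Finset.univ.filter (fun z : ZMod m => Q z.val)).card =
      ((Finset.range m).filter (fun s => Q s)).card := by
  apply Finset.card_bij (fun z _ => z.val)
  · intro z hz
    simp only [Finset.mem_filter, Finset.mem_univ, true_and] at hz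
    exact Finset.mem_filter.mpr ⟨Finset.mem_range.mpr (ZMod.val_lt z), hz⟩
  · intro a _ b _ hab
    exact ZMod.val_injective m hab
  · intro s hs
    simp only [Finset.mem_filter, Finset.mem_range] at hs
    refine ⟨(s : ZMod m), ?_, ?_⟩
    · simp only [Finset.mem_filter, Finset.mem_univ, true_and]
      rw [ZMod.val_cast_of_lt hs.1]
      exact hs.2
    · rw [ZMod.val_cast_of_lt hs.1]

lemma crt_count (k : ℕ) (m : Fin k → ℕ) (hm : ∀ i, 0 < m i)
    (hcop : Pairwise (Function.onFun Nat.Coprime m)) (Q : Fin k → ℕ → Prop)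
    [∀ i, DecidablePred (Q i)] :
    ((Finset.range (∏ i, m i)).filter (fun r => ∀ i, Q i (r % m i))).card =
      ∏ i, ((Finset.range (m i)).filter (fun s => Q i s)).card := by
  classical
  set P := ∏ i, m i with hP
  have hPpos : 0 < P := Finset.prod_pos fun i _ => hm i
  haveI : NeZero P := ⟨hPpos.ne'⟩
  haveI : ∀ i, NeZero (m i) := fun i => ⟨(hm i).ne'⟩
  let e := ZMod.prodEquivPi m hcop
  have hecast : ∀ r : ℕ, e (r : ZMod P) = fun i => (r : ZMod (m i)) := by
    intro r
    have := map_natCast (e : ZMod P →+* Π i, ZMod (m i)) r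
    exact this
  have step1 : ((Finset.range P).filter (fun r => ∀ i, Q i (r % m i))).card =
      (Fintype.piFinset
        (fun i => Finset.univ.filter (fun z : ZMod (m i) => Q i z.val))).card := by
    apply Finset.card_bij (fun r _ => fun i => ((r : ℕ) : ZMod (m i)))
    · intro r hr
      simp only [Finset.mem_filter, Finset.mem_range] at hr
      rw [Fintype.mem_piFinset]
      intro i
      simp only [Finset.mem_filter, Finset.mem_univ, true_and, ZMod.val_natCast]
      exact hr.2 i
    · intro a ha b hb hab
      simp only [Finset.mem_filter, Finset.mem_range] at ha hb
      have : (a : ZMod P) = (b : ZMod P) := by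
        apply e.injective
        rw [hecast, hecast]
        exact hab
      have := congrArg ZMod.val this
      rwa [ZMod.val_natCast, ZMod.val_natCast, Nat.mod_eq_of_lt ha.1,
        Nat.mod_eq_of_lt hb.1] at this
    · intro w hw
      rw [Fintype.mem_piFinset] at hw
      have hval : e (((e.symm w).val : ℕ) : ZMod P) = w := by
        rw [ZMod.natCast_val, ZMod.cast_id]
        exact e.apply_symm_apply w
      have hcast2 : ∀ i, (((e.symm w).val : ℕ) : ZMod (m i)) = w i := by
        intro i
        have h := congrFun (hecast (e.symm w).val) i
        rw [hval] at h
        exact h.symm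
      refine ⟨(e.symm w).val, ?_, ?_⟩
      · simp only [Finset.mem_filter, Finset.mem_range]
        refine ⟨ZMod.val_lt _, fun i => ?_⟩
        have hw' := hw i
        simp only [Finset.mem_filter, Finset.mem_univ, true_and] at hw'
        rw [← ZMod.val_natCast, hcast2 i]
        exact hw'
      · funext i
        exact hcast2 i
  rw [step1, Fintype.card_piFinset]
  exact Finset.prod_congr rfl fun i _ => card_zmod_filter (m i) (Q i)

lemma count_good (p : ℕ) (hp : p.Prime) (M : ℕ) (E : Set ℕ) [DecidablePred (· ∈ E)] :
    ((((Finset.range (p ^ (M + 1))).filter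
        (fun s => s ≠ 0 ∧ padicValNat p s ∈ E)).card : ℕ) : ℝ) =
      (p : ℝ) ^ (M + 1) * (1 - 1 / p) *
        ∑ e ∈ (Finset.range (M + 1)).filter (· ∈ E), ((1 : ℝ) / p) ^ e := by
  haveI : Fact p.Prime := ⟨hp⟩
  have hp0 : 0 < p := hp.pos
  have hpR : (p : ℝ) ≠ 0 := by exact_mod_cast hp0.ne'
  set m := p ^ (M + 1) with hm
  have hmpos : 0 < m := pow_pos hp0 _
  set F := (Finset.range (M + 1)).filter (· ∈ E) with hF
  have stepA : ((Finset.range m).filter (fun s => s ≠ 0 ∧ padicValNat p s ∈ E)).card =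
      ∑ e ∈ F, (m / p ^ e - m / p ^ (e + 1)) := by
    rw [Finset.card_eq_sum_card_fiberwise (f := padicValNat p) (t := F) ?_]
    · refine Finset.sum_congr rfl fun e he => ?_
      simp only [hF, Finset.mem_filter, Finset.mem_range] at he
      have hfiber : (((Finset.range m).filter (fun s => s ≠ 0 ∧ padicValNat p s ∈ E)).filter
          (fun s => padicValNat p s = e)) =
          ((Finset.range m).filter (fun s => p ^ e ∣ s)) \
            ((Finset.range m).filter (fun s => p ^ (e + 1) ∣ s)) := by
        ext s
        simp only [Finset.mem_filter, Finset.mem_sdiff, Finset.mem_range]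
        constructor
        · rintro ⟨⟨hs, hs0, _⟩, hv⟩
          refine ⟨⟨hs, hv ▸ pow_padicValNat_dvd⟩, fun hcon => ?_⟩
          exact (hv ▸ pow_succ_padicValNat_not_dvd hs0 : ¬ p ^ (e + 1) ∣ s) hcon.2
        · rintro ⟨⟨hs, hdvd⟩, hndvd⟩
          have hs0 : s ≠ 0 := by rintro rfl; exact hndvd ⟨hs, dvd_zero _⟩
          have h1 : e ≤ padicValNat p s := (padicValNat_dvd_iff_le hs0).mp hdvd
          have h2 : ¬ (e + 1 ≤ padicValNat p s) := fun h =>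
            hndvd ⟨hs, (padicValNat_dvd_iff_le hs0).mpr h⟩
          have hv : padicValNat p s = e := by omega
          exact ⟨⟨hs, hs0, hv ▸ he.2⟩, hv⟩
      rw [hfiber, Finset.card_sdiff_of_subset ?_, card_multiples_range m (p ^ e) (pow_pos hp0 e)
          (pow_dvd_pow p (by omega)), card_multiples_range m (p ^ (e + 1)) (pow_pos hp0 _)
          (pow_dvd_pow p (by omega))]
      · intro s hs
        simp only [Finset.mem_filter] at hs ⊢
        exact ⟨hs.1, (pow_dvd_pow p (Nat.le_succ e)).trans hs.2⟩
    · intro s hs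
      simp only [Finset.mem_coe, Finset.mem_filter, Finset.mem_range] at hs
      simp only [hF, Finset.mem_coe, Finset.mem_filter, Finset.mem_range]
      refine ⟨?_, hs.2.2⟩
      by_contra hcon
      have : p ^ (M + 1) ∣ s := (padicValNat_dvd_iff_le hs.2.1).mpr (by omega)
      exact absurd hs.1 (not_lt.mpr (Nat.le_of_dvd (Nat.pos_of_ne_zero hs.2.1) this))
  have hcast : ∀ e ≤ M + 1, ((p ^ (M + 1 - e) : ℕ) : ℝ) =
      (p : ℝ) ^ (M + 1) * ((1 : ℝ) / p) ^ e := by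
    intro e he
    push_cast
    rw [one_div, inv_pow, eq_comm, mul_inv_eq_iff_eq_mul₀ (pow_ne_zero e hpR), ← pow_add]
    congr 1
    omega
  rw [stepA]
  push_cast [Nat.cast_sum]
  rw [Finset.mul_sum]
  refine Finset.sum_congr rfl fun e he => ?_
  simp only [hF, Finset.mem_filter, Finset.mem_range] at he
  have he1 : e ≤ M + 1 := by omega
  have he2 : e + 1 ≤ M + 1 := by omega
  have hd1 : m / p ^ e = p ^ (M + 1 - e) := Nat.pow_div he1 hp0
  have hd2 : m / p ^ (e + 1) = p ^ (M + 1 - (e + 1)) := Nat.pow_div he2 hp0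
  have hle : m / p ^ (e + 1) ≤ m / p ^ e :=
    Nat.div_le_div_left (Nat.pow_le_pow_right hp0 (Nat.le_succ e)) (pow_pos hp0 e)
  rw [Nat.cast_sub hle, hd1, hd2, hcast e he1, hcast (e + 1) he2]
  ring

lemma tendsto_T (p : ℕ) (hp : 2 ≤ p) (E : Set ℕ) [DecidablePred (· ∈ E)] :
    Tendsto (fun M : ℕ => ∑ e ∈ (Finset.range (M + 1)).filter (· ∈ E), ((1 : ℝ) / p) ^ e)
      atTop (𝓝 (∑' e : E, (1 : ℝ) / (p : ℝ) ^ (e : ℕ))) := by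
  have hp0 : (0 : ℝ) < p := by exact_mod_cast (by omega : 0 < p)
  have hlt : (1 : ℝ) / p < 1 := by
    rw [div_lt_one hp0]
    exact_mod_cast (by omega : 1 < p)
  have hsumf : Summable (fun e : ℕ => ((1 : ℝ) / p) ^ e) :=
    summable_geometric_of_lt_one (by positivity) hlt
  have hsum : Summable (Set.indicator E (fun e : ℕ => ((1 : ℝ) / p) ^ e)) :=
    hsumf.indicator E
  have htsum : ∑' e, Set.indicator E (fun e : ℕ => ((1 : ℝ) / p) ^ e) e =
      ∑' e : E, (1 : ℝ) / (p : ℝ) ^ (e : ℕ) := by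
    rw [← _root_.tsum_subtype]
    exact tsum_congr fun e => by rw [div_pow, one_pow]
  have h := hsum.hasSum.tendsto_sum_nat.comp (tendsto_add_atTop_nat 1)
  rw [htsum] at h
  convert h using 2 with M
  simp only [Function.comp_apply]
  rw [Finset.sum_indicator_eq_sum_filter]

end BuckAux

theorem stmt_5 (k : ℕ) (p : Fin k → ℕ) (hp : ∀ i, (p i).Prime)
    (hmono : StrictMono p) (E : Fin k → Set ℕ)
    (hEinf : ∀ i, (E i).Infinite) (hEpos : ∀ i, ∀ e ∈ E i, 0 < e) :
    BuckMeasurable {n : ℕ | ∀ i, padicValNat (p i) n ∈ E i} ∧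
      buckDensity {n : ℕ | ∀ i, padicValNat (p i) n ∈ E i} =
        (∏ i, (1 - 1 / (p i : ℝ))) *
          ∏ i, ∑' e : E i, (1 : ℝ) / (p i : ℝ) ^ (e : ℕ) := by
  classical
  open Finset Filter Topology in
  set N := {n : ℕ | ∀ i, padicValNat (p i) n ∈ E i} with hN
  have hppos : ∀ i, 0 < p i := fun i => (hp i).pos
  have hpR0 : ∀ i, (p i : ℝ) ≠ 0 := fun i => by exact_mod_cast (hppos i).ne'
  have hplt : ∀ i, (1 : ℝ) / p i < 1 := fun i => by
    rw [div_lt_one (by exact_mod_cast hppos i)]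
    exact_mod_cast (hp i).one_lt
  set T : Fin k → ℕ → ℝ :=
    fun i M => ∑ e ∈ (Finset.range (M + 1)).filter (· ∈ E i), ((1 : ℝ) / p i) ^ e with hT
  have hTg : ∀ i, Filter.Tendsto (fun M => T i M) Filter.atTop
      (nhds (∑' e : E i, (1 : ℝ) / (p i : ℝ) ^ (e : ℕ))) :=
    fun i => tendsto_T (p i) (hp i).two_le (E i)
  set A : ℝ := ∏ i, ((1 - 1 / (p i : ℝ)) * ∑' e : E i, (1 : ℝ) / (p i : ℝ) ^ (e : ℕ)) with hA
  -- main per-M bounds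
  have main : ∀ M : ℕ,
      buckDensity N ≤ ∏ i, ((1 : ℝ) / (p i : ℝ) ^ (M + 1) + (1 - 1 / (p i : ℝ)) * T i M) ∧
      buckDensity Nᶜ ≤ 1 - ∏ i, ((1 - 1 / (p i : ℝ)) * T i M) := by
    intro M
    have hmpos : ∀ i, 0 < p i ^ (M + 1) := fun i => pow_pos (hppos i) _
    set P := ∏ i, p i ^ (M + 1) with hP
    have hPpos : 0 < P := Finset.prod_pos fun i _ => hmpos i
    have hcop : Pairwise (Function.onFun Nat.Coprime fun i => p i ^ (M + 1)) := by
      intro i j hij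
      have hco := (Nat.coprime_primes (hp i) (hp j)).mpr (hmono.injective.ne hij)
      exact Nat.Coprime.pow _ _ hco
    have hmdvdP : ∀ i, p i ^ (M + 1) ∣ P :=
      fun i => Finset.dvd_prod_of_mem _ (Finset.mem_univ i)
    have hDval : ∀ i, ((((Finset.range (p i ^ (M + 1))).filter
        (fun s => s ≠ 0 ∧ padicValNat (p i) s ∈ E i)).card : ℕ) : ℝ) =
        (p i : ℝ) ^ (M + 1) * (1 - 1 / (p i : ℝ)) * T i M :=
      fun i => count_good (p i) (hp i) M (E i)
    constructor
    · -- cover of N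
      set RN := (Finset.range P).filter
        (fun r => ∀ i, r % p i ^ (M + 1) = 0 ∨
          (r % p i ^ (M + 1) ≠ 0 ∧ padicValNat (p i) (r % p i ^ (M + 1)) ∈ E i)) with hRN
      have hcovN : ∀ n ∈ N, n % P ∈ RN := by
        intro n hn
        refine Finset.mem_filter.mpr
          ⟨Finset.mem_range.mpr (Nat.mod_lt n hPpos), fun i => ?_⟩
        rw [Nat.mod_mod_of_dvd n (hmdvdP i)]
        by_cases hdvd : p i ^ (M + 1) ∣ n
        · left
          obtain ⟨c, rfl⟩ := hdvd
          exact Nat.mul_mod_right _ _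
        · right
          have hs0 : n % p i ^ (M + 1) ≠ 0 := fun h => hdvd (Nat.dvd_of_mod_eq_zero h)
          have hv : padicValNat (p i) n = padicValNat (p i) (n % p i ^ (M + 1)) :=
            padicValNat_congr (hp i) (Nat.mod_modEq n (p i ^ (M + 1))).symm hdvd
          exact ⟨hs0, hv ▸ hn i⟩
      have hcardRN : RN.card = ∏ i, (((Finset.range (p i ^ (M + 1))).filter
          (fun s => s ≠ 0 ∧ padicValNat (p i) s ∈ E i)).card + 1) := by
        rw [hRN]
        rw [crt_count k (fun i => p i ^ (M + 1)) hmpos hcop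
          (fun i s => s = 0 ∨ (s ≠ 0 ∧ padicValNat (p i) s ∈ E i))]
        refine Finset.prod_congr rfl fun i _ => ?_
        have hins : (Finset.range (p i ^ (M + 1))).filter
            (fun s => s = 0 ∨ (s ≠ 0 ∧ padicValNat (p i) s ∈ E i)) =
            insert 0 ((Finset.range (p i ^ (M + 1))).filter
              (fun s => s ≠ 0 ∧ padicValNat (p i) s ∈ E i)) := by
          ext s
          simp only [Finset.mem_filter, Finset.mem_insert, Finset.mem_range]
          constructor
          · rintro ⟨hs, h0 | hQ⟩
            · exact Or.inl h0
            · exact Or.inr ⟨hs, hQ⟩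
          · rintro (rfl | ⟨hs, hQ⟩)
            · exact ⟨hmpos i, Or.inl rfl⟩
            · exact ⟨hs, Or.inr hQ⟩
        rw [hins, Finset.card_insert_of_notMem (by simp)]
      have hbound := buckDensity_le_of_cover N P hPpos RN hcovN
      refine hbound.trans (le_of_eq ?_)
      rw [hcardRN, hP]
      push_cast
      rw [← Finset.prod_div_distrib]
      refine Finset.prod_congr rfl fun i _ => ?_
      have hD' : ((((Finset.range (p i ^ (M + 1))).filter
          (fun s => s ≠ 0 ∧ padicValNat (p i) s ∈ E i)).card : ℕ) : ℝ) =
          (p i : ℝ) ^ (M + 1) * ((1 - 1 / (p i : ℝ)) * T i M) := by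
        rw [hDval i]; ring
      rw [hD', add_div, mul_div_cancel_left₀ _ (pow_ne_zero _ (hpR0 i))]
      rw [one_div ((p i : ℝ) ^ (M + 1))]
      ring
    · -- cover of Nᶜ
      set RC := (Finset.range P).filter
        (fun r => ¬ ∀ i, (r % p i ^ (M + 1) ≠ 0 ∧
          padicValNat (p i) (r % p i ^ (M + 1)) ∈ E i)) with hRC
      have hcovC : ∀ n ∈ Nᶜ, n % P ∈ RC := by
        intro n hn
        refine Finset.mem_filter.mpr
          ⟨Finset.mem_range.mpr (Nat.mod_lt n hPpos), fun hall => hn ?_⟩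
        intro i
        have h := hall i
        rw [Nat.mod_mod_of_dvd n (hmdvdP i)] at h
        have hnd : ¬ p i ^ (M + 1) ∣ n % p i ^ (M + 1) := fun hd =>
          h.1 (Nat.eq_zero_of_dvd_of_lt hd (Nat.mod_lt n (hmpos i)))
        have hv : padicValNat (p i) (n % p i ^ (M + 1)) = padicValNat (p i) n :=
          padicValNat_congr (hp i) (Nat.mod_modEq n (p i ^ (M + 1))) hnd
        exact hv ▸ h.2
      have hprodle : ∏ i, ((Finset.range (p i ^ (M + 1))).filter
          (fun s => s ≠ 0 ∧ padicValNat (p i) s ∈ E i)).card ≤ P := by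
        rw [hP]
        refine Finset.prod_le_prod (fun i _ => Nat.zero_le _) (fun i _ => ?_)
        exact (Finset.card_filter_le _ _).trans_eq (Finset.card_range _)
      have hcardRC : RC.card = P - ∏ i, ((Finset.range (p i ^ (M + 1))).filter
          (fun s => s ≠ 0 ∧ padicValNat (p i) s ∈ E i)).card := by
        rw [hRC, Finset.filter_not, Finset.card_sdiff_of_subset (Finset.filter_subset _ _),
          Finset.card_range]
        congr 1
        exact crt_count k (fun i => p i ^ (M + 1)) hmpos hcop
          (fun i s => s ≠ 0 ∧ padicValNat (p i) s ∈ E i)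
      have hbound := buckDensity_le_of_cover Nᶜ P hPpos RC hcovC
      refine hbound.trans (le_of_eq ?_)
      rw [hcardRC, Nat.cast_sub hprodle, sub_div,
        div_self (by exact_mod_cast hPpos.ne' : (P : ℝ) ≠ 0)]
      congr 1
      rw [hP]
      push_cast
      rw [← Finset.prod_div_distrib]
      refine Finset.prod_congr rfl fun i _ => ?_
      have hD' : ((((Finset.range (p i ^ (M + 1))).filter
          (fun s => s ≠ 0 ∧ padicValNat (p i) s ∈ E i)).card : ℕ) : ℝ) =
          (p i : ℝ) ^ (M + 1) * ((1 - 1 / (p i : ℝ)) * T i M) := by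
        rw [hDval i]; ring
      rw [hD', mul_div_cancel_left₀ _ (pow_ne_zero _ (hpR0 i))]
  -- limits
  have hprodTend : Filter.Tendsto (fun M => ∏ i, ((1 - 1 / (p i : ℝ)) * T i M))
      Filter.atTop (nhds A) := by
    rw [hA]
    exact tendsto_finset_prod _ fun i _ => (hTg i).const_mul _
  have hlim1 : Filter.Tendsto
      (fun M : ℕ => ∏ i, ((1 : ℝ) / (p i : ℝ) ^ (M + 1) + (1 - 1 / (p i : ℝ)) * T i M))
      Filter.atTop (nhds A) := by
    rw [hA]
    refine tendsto_finset_prod _ fun i _ => ?_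
    have h0 : Filter.Tendsto (fun M : ℕ => (1 : ℝ) / (p i : ℝ) ^ (M + 1))
        Filter.atTop (nhds 0) := by
      have h := (tendsto_pow_atTop_nhds_zero_of_lt_one
        (r := 1 / (p i : ℝ)) (by positivity) (hplt i)).comp
        (Filter.tendsto_add_atTop_nat 1)
      convert h using 2 with M
      simp only [Function.comp_apply]
      rw [div_pow, one_pow]
    have h := h0.add ((hTg i).const_mul (1 - 1 / (p i : ℝ)))
    rwa [zero_add] at h
  have hub1 : buckDensity N ≤ A := ge_of_tendsto' hlim1 fun M => (main M).1
  have hlim2 : Filter.Tendsto (fun M : ℕ => 1 - ∏ i, ((1 - 1 / (p i : ℝ)) * T i M))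
      Filter.atTop (nhds (1 - A)) := tendsto_const_nhds.sub hprodTend
  have hub2 : buckDensity Nᶜ ≤ 1 - A := ge_of_tendsto' hlim2 fun M => (main M).2
  have hlb : 1 ≤ buckDensity N + buckDensity Nᶜ := one_le_add_buckDensity N
  have hNA : buckDensity N = A := le_antisymm hub1 (by linarith)
  constructor
  · show buckDensity N + buckDensity Nᶜ = 1
    linarith
  · rw [hNA, hA, Finset.prod_mul_distrib]
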